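/- The octahedral graph K_{2,2,2} has treewidth exactly four, and it is minor-minimal with this property: every proper minor of K_{2,2,2} has treewidth at most three. -/

import Mathlib

open SimpleGraph Function

/-- Treewidth at most `k`, via tree decompositions. -/
def TreewidthLE {V : Type} (G : SimpleGraph V) (k : ℕ) : Prop :=
  ∃ (ι : Type) (T : SimpleGraph ι) (bag : ι → Finset V),
    T.IsTree ∧
    (∀ v, ∃ i, v ∈ bag i) ∧
    (∀ u v, G.Adj u v → ∃ i, u ∈ bag i ∧ v ∈ bag i) ∧
    (∀ (v : V) (i j : ι) (p : T.Walk i j), p.IsPath → v ∈ bag i → v ∈ bag j →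
      ∀ m ∈ p.support, v ∈ bag m) ∧
    (∀ i, (bag i).card ≤ k + 1)

/-- The octahedral graph `K_{2,2,2}`: complete tripartite with parts
`{0,3}`, `{1,4}`, `{2,5}` (adjacency iff different residues mod 3). -/
def K222 : SimpleGraph (Fin 6) where
  Adj a b := a.val % 3 ≠ b.val % 3
  symm := ⟨fun _ _ h => Ne.symm h⟩
  loopless := ⟨fun _ h => h rfl⟩

/-- `H` is a minor of `G`, witnessed by nonempty, disjoint, connected branch sets. -/
def IsMinorOf {W V : Type} (H : SimpleGraph W) (G : SimpleGraph V) : Prop :=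
  ∃ B : W → Set V,
    (∀ w, (B w).Nonempty) ∧
    (∀ u v : W, u ≠ v → Disjoint (B u) (B v)) ∧
    (∀ w, ∀ a ∈ B w, ∀ b ∈ B w,
      Relation.ReflTransGen (fun x y => G.Adj x y ∧ x ∈ B w ∧ y ∈ B w) a b) ∧
    (∀ u v, H.Adj u v → ∃ a ∈ B u, ∃ b ∈ B v, G.Adj a b)

instance : DecidableRel K222.Adj := fun a b =>
  inferInstanceAs (Decidable (a.val % 3 ≠ b.val % 3))

/-- tiny path graphs -/
def P2 : SimpleGraph (Fin 2) where
  Adj i j := i ≠ j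
  symm := ⟨fun _ _ h => Ne.symm h⟩
  loopless := ⟨fun _ h => h rfl⟩

instance : DecidableRel P2.Adj := fun a b => inferInstanceAs (Decidable (a ≠ b))

def P3 : SimpleGraph (Fin 3) where
  Adj i j := i.val + 1 = j.val ∨ j.val + 1 = i.val
  symm := ⟨fun _ _ h => h.symm⟩
  loopless := ⟨fun i h => by omega⟩

instance : DecidableRel P3.Adj := fun a b =>
  inferInstanceAs (Decidable (_ ∨ _))

lemma isAcyclic_of_card_edge {V : Type} [Fintype V] [DecidableEq V] (G : SimpleGraph V)
    [DecidableRel G.Adj] (h : G.edgeFinset.card ≤ 2) : G.IsAcyclic := by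
  intro v c hc
  have h3 := hc.three_le_length
  have hnodup := hc.edges_nodup
  have hsub : c.edges.toFinset ⊆ G.edgeFinset := by
    intro e he
    rw [List.mem_toFinset] at he
    exact mem_edgeFinset.mpr (c.edges_subset_edgeSet he)
  have hle := Finset.card_le_card hsub
  rw [List.toFinset_card_of_nodup hnodup, c.length_edges] at hle
  omega

lemma P2_isTree : P2.IsTree := by
  constructor
  · refine ⟨fun i j => ?_⟩
    by_cases h : i = j
    · exact h ▸ Reachable.refl i
    · exact (Adj.reachable h)
  · apply isAcyclic_of_card_edge
    decide

lemma P3_isTree : P3.IsTree := by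
  constructor
  · refine ⟨fun i j => ?_⟩
    have a01 : P3.Adj 0 1 := by decide
    have a12 : P3.Adj 1 2 := by decide
    fin_cases i <;> fin_cases j
    · rfl
    · exact a01.reachable
    · exact (a01.reachable.trans a12.reachable)
    · exact a01.reachable.symm
    · rfl
    · exact a12.reachable
    · exact (a01.reachable.trans a12.reachable).symm
    · exact a12.reachable.symm
    · rfl
  · apply isAcyclic_of_card_edge
    decide

lemma P2_support {i j : Fin 2} (p : P2.Walk i j) (hp : p.IsPath) :
    ∀ m ∈ p.support, m = i ∨ m = j := by
  by_cases hij : i = j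
  · subst hij
    rw [Walk.isPath_iff_eq_nil.mp hp]
    intro m hm
    rw [Walk.support_nil, List.mem_singleton] at hm
    exact Or.inl hm
  · intro m hm
    have : ∀ i j m : Fin 2, i ≠ j → m = i ∨ m = j := by decide
    exact this i j m hij

lemma P3_adj_one {u k : Fin 3} (h : P3.Adj u k) (hk : k ≠ 1) : u = 1 := by
  revert h hk; revert u k; decide

lemma P3_support {i j : Fin 3} (p : P3.Walk i j) (hp : p.IsPath) :
    ∀ m ∈ p.support, m = i ∨ m = j ∨ (i ≠ 1 ∧ j ≠ 1 ∧ i ≠ j ∧ m = 1) := by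
  induction p with
  | nil =>
    intro m hm
    rw [Walk.support_nil, List.mem_singleton] at hm
    exact Or.inl hm
  | @cons u k j h q ih =>
    intro m hm
    have hq : q.IsPath := hp.of_cons
    have hu : u ∉ q.support := ((Walk.cons_isPath_iff h q).mp hp).2
    rw [Walk.support_cons] at hm
    rcases List.mem_cons.mp hm with rfl | hm'
    · exact Or.inl rfl
    · rcases ih hq m hm' with rfl | h' | ⟨hk1, hj1, hkj, rfl⟩
      · -- m = k
        by_cases hkj : m = j
        · exact Or.inr (Or.inl hkj)
        · have hm1 : m = 1 := by
            by_contra hne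
            have hu1 : u = 1 := P3_adj_one h hne
            cases q with
            | nil => exact hkj rfl
            | @cons _ k' _ h' q' =>
              have hk'1 : k' = 1 := P3_adj_one h'.symm hne
              have : u ∈ q'.support := by
                rw [hu1, ← hk'1]; exact q'.start_mem_support
              exact hu (by rw [Walk.support_cons]; exact List.mem_cons_of_mem _ this)
          subst hm1
          have hu1 : u ≠ 1 := h.ne
          have hj1 : j ≠ 1 := fun hj => hkj hj.symm
          have huj : u ≠ j := by
            rintro rfl
            exact hu q.end_mem_support
          exact Or.inr (Or.inr ⟨hu1, hj1, huj, rfl⟩)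
      · exact Or.inr (Or.inl h')
      · -- k ≠ 1, so u = 1, so m = 1 = u
        exact Or.inl (P3_adj_one h hk1).symm

section Bags
variable {V : Type} (G : SimpleGraph V)

lemma oneBag [Fintype V] {k : ℕ} (h : Fintype.card V ≤ k + 1) : TreewidthLE G k := by
  classical
  refine ⟨Fin 1, ⊥, fun _ => Finset.univ, ?_, ?_, ?_, ?_, ?_⟩
  · constructor
    · refine ⟨fun i j => ?_⟩
      rw [Subsingleton.elim i j]
    · intro v c hc
      cases c with
      | nil => exact hc.ne_nil rfl
      | cons h' q => exact h'.elim
  · intro v; exact ⟨0, Finset.mem_univ v⟩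
  · intro u v _; exact ⟨0, Finset.mem_univ u, Finset.mem_univ v⟩
  · intro v i j p hp hvi hvj m hm; exact Finset.mem_univ v
  · intro i; simpa using h

lemma twoBag {k : ℕ} (b : Fin 2 → Finset V)
    (hcov : ∀ v, ∃ i, v ∈ b i)
    (hedge : ∀ u v, G.Adj u v → ∃ i, u ∈ b i ∧ v ∈ b i)
    (hcard : ∀ i, (b i).card ≤ k + 1) : TreewidthLE G k := by
  refine ⟨Fin 2, P2, b, P2_isTree, hcov, hedge, ?_, hcard⟩
  intro v i j p hp hvi hvj m hm
  rcases P2_support p hp m hm with rfl | rfl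
  · exact hvi
  · exact hvj

lemma threeBag {k : ℕ} (b : Fin 3 → Finset V)
    (hcov : ∀ v, ∃ i, v ∈ b i)
    (hedge : ∀ u v, G.Adj u v → ∃ i, u ∈ b i ∧ v ∈ b i)
    (hmid : ∀ v, v ∈ b 0 → v ∈ b 2 → v ∈ b 1)
    (hcard : ∀ i, (b i).card ≤ k + 1) : TreewidthLE G k := by
  refine ⟨Fin 3, P3, b, P3_isTree, hcov, hedge, ?_, hcard⟩
  intro v i j p hp hvi hvj m hm
  rcases P3_support p hp m hm with rfl | rfl | ⟨hi1, hj1, hij, rfl⟩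
  · exact hvi
  · exact hvj
  · have : (i = 0 ∧ j = 2) ∨ (i = 2 ∧ j = 0) := by
      fin_cases i <;> fin_cases j <;> simp_all
    rcases this with ⟨rfl, rfl⟩ | ⟨rfl, rfl⟩
    · exact hmid v hvi hvj
    · exact hmid v hvj hvi

lemma twoBagNonadj [Fintype V] [DecidableEq V] {k : ℕ} (u v : V) (huv : u ≠ v)
    (hnadj : ¬ G.Adj u v) (hc : Fintype.card V ≤ k + 2) : TreewidthLE G k := by
  have hmemu : u ∈ Finset.univ.erase v := Finset.mem_erase.mpr ⟨huv, Finset.mem_univ u⟩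
  have hmemv : v ∈ Finset.univ.erase u := Finset.mem_erase.mpr ⟨huv.symm, Finset.mem_univ v⟩
  refine twoBag G ![Finset.univ.erase v, Finset.univ.erase u] ?_ ?_ ?_
  · intro x
    by_cases hx : x = v
    · exact ⟨1, by simp [hx, huv.symm]⟩
    · exact ⟨0, by simp [hx]⟩
  · intro x y hxy
    by_cases hx : x = v
    · subst hx
      refine ⟨1, hmemv, Finset.mem_erase.mpr ⟨?_, Finset.mem_univ y⟩⟩
      rintro rfl
      exact hnadj hxy.symm
    · by_cases hy : y = v
      · subst hy
        refine ⟨1, Finset.mem_erase.mpr ⟨?_, Finset.mem_univ x⟩, hmemv⟩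
        rintro rfl
        exact hnadj hxy
      · exact ⟨0, Finset.mem_erase.mpr ⟨hx, Finset.mem_univ x⟩,
          Finset.mem_erase.mpr ⟨hy, Finset.mem_univ y⟩⟩
  · have key : ∀ x : V, (Finset.univ.erase x).card ≤ k + 1 := by
      intro x
      rw [Finset.card_erase_of_mem (Finset.mem_univ _), Finset.card_univ]
      omega
    intro i
    fin_cases i
    · exact key v
    · exact key u

end Bags

lemma tw_mono {W V : Type} (H : SimpleGraph W) (G : SimpleGraph V) (f : W → V)
    (hf : Injective f) (hhom : ∀ u v, H.Adj u v → G.Adj (f u) (f v)) {k : ℕ}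
    (h : TreewidthLE G k) : TreewidthLE H k := by
  classical
  obtain ⟨ι, T, bag, htree, hcov, hedge, hpath, hcard⟩ := h
  refine ⟨ι, T, fun i => (bag i).preimage f hf.injOn, htree, ?_, ?_, ?_, ?_⟩
  · intro w
    obtain ⟨i, hi⟩ := hcov (f w)
    exact ⟨i, Finset.mem_preimage.mpr hi⟩
  · intro p q hpq
    obtain ⟨i, h1, h2⟩ := hedge _ _ (hhom p q hpq)
    exact ⟨i, Finset.mem_preimage.mpr h1, Finset.mem_preimage.mpr h2⟩
  · intro w i j p hp hwi hwj m hm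
    exact Finset.mem_preimage.mpr
      (hpath (f w) i j p hp (Finset.mem_preimage.mp hwi) (Finset.mem_preimage.mp hwj) m hm)
  · intro i
    exact le_trans
      (Finset.card_le_card_of_injOn f (fun x hx => Finset.mem_preimage.mp hx)
        (hf.injOn.mono (Set.subset_univ _)))
      (hcard i)

section LowerBound
variable {ι : Type} {T : SimpleGraph ι}

/-- path-closed ("subtree") sets of tree nodes -/
def PC (T : SimpleGraph ι) (S : Set ι) : Prop :=
  ∀ i ∈ S, ∀ j ∈ S, ∀ p : T.Walk i j, p.IsPath → ∀ m ∈ p.support, m ∈ S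

lemma PC.inter {S S' : Set ι} (h : PC T S) (h' : PC T S') : PC T (S ∩ S') :=
  fun i hi j hj p hp m hm =>
    ⟨h i hi.1 j hj.1 p hp m hm, h' i hi.2 j hj.2 p hp m hm⟩

lemma crossing {u j : ι} (p : T.Walk u j) (hp : p.IsPath) (A : Set ι)
    (hj : j ∉ A) (hz : ∃ z ∈ p.support, z ∈ A) :
    ∃ x ∈ A, ∃ r : T.Walk x j, r.IsPath ∧ (∀ z ∈ r.support, z ∈ A → z = x) := by
  classical
  induction p with
  | nil =>
    obtain ⟨z, hz1, hz2⟩ := hz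
    rw [Walk.support_nil, List.mem_singleton] at hz1
    exact absurd (hz1 ▸ hz2) hj
  | @cons u k j h q ih =>
    by_cases hq : ∃ z ∈ q.support, z ∈ A
    · exact ih hp.of_cons hj hq
    · obtain ⟨z, hz1, hz2⟩ := hz
      rw [Walk.support_cons, List.mem_cons] at hz1
      have hzu : z = u := by
        rcases hz1 with rfl | hz1
        · rfl
        · exact absurd ⟨z, hz1, hz2⟩ hq
      subst hzu
      refine ⟨z, hz2, Walk.cons h q, hp, ?_⟩
      intro y hy hyA
      rw [Walk.support_cons, List.mem_cons] at hy
      rcases hy with rfl | hy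
      · rfl
      · exact absurd ⟨y, hy, hyA⟩ hq

lemma sep (htree : T.IsTree) {A B : Set ι} (hA : PC T A) (hB : PC T B)
    (hAne : A.Nonempty) (hBne : B.Nonempty)
    (hdisj : ∀ z, z ∈ A → z ∈ B → False) :
    ∃ x ∈ A, ∀ S : Set ι, PC T S →
      (∃ q, q ∈ S ∧ q ∈ A) → (∃ r, r ∈ S ∧ r ∈ B) → x ∈ S := by
  classical
  obtain ⟨i, hi⟩ := hAne
  obtain ⟨j, hj⟩ := hBne
  obtain ⟨w0⟩ := htree.isConnected i j
  set p : T.Path i j := w0.toPath with hpdef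
  have hjA : j ∉ A := fun h => hdisj j h hj
  obtain ⟨x, hxA, r, hr, hrmin⟩ :=
    crossing (p : T.Walk i j) p.2 A hjA ⟨i, Walk.start_mem_support _, hi⟩
  cases r with
  | nil => exact absurd hxA hjA
  | @cons _ y _ hxy r' =>
    have hr' : r'.IsPath := hr.of_cons
    have hxr' : x ∉ r'.support := ((Walk.cons_isPath_iff hxy r').mp hr).2
    have hyA : y ∉ A := by
      intro hyA
      have := hrmin y (by rw [Walk.support_cons]; exact List.mem_cons_of_mem _ r'.start_mem_support) hyA
      exact hxy.ne' this
    set D := T.deleteEdges {s(x, y)} with hD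
    have hbridge : ¬ D.Reachable x y := by
      have hb : T.IsBridge s(x, y) :=
        (isAcyclic_iff_forall_edge_isBridge.mp htree.IsAcyclic)
          ((T.mem_edgeSet).mpr hxy)
      exact isBridge_iff.mp hb
    have keyreach : ∀ (a b : ι) (S' : Set ι), PC T S' → a ∈ S' → b ∈ S' → x ∉ S' →
        D.Reachable a b := by
      intro a b S' hS' ha hb hxS'
      obtain ⟨w⟩ := htree.isConnected a b
      set q : T.Path a b := w.toPath
      have hsup : ∀ m ∈ (q : T.Walk a b).support, m ∈ S' :=
        fun m hm => hS' a ha b hb q q.2 m hm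
      have hedge : ∀ e ∈ (q : T.Walk a b).edges, e ∉ ({s(x, y)} : Set (Sym2 ι)) := by
        intro e he hee
        rw [Set.mem_singleton_iff] at hee
        subst hee
        exact hxS' (hsup x ((q : T.Walk a b).fst_mem_support_of_mem_edges he))
      exact ⟨((q : T.Walk a b).toDeleteEdges _ hedge)⟩
    have hF1 : ∀ z ∈ A, D.Reachable x z := by
      intro z hz
      obtain ⟨w⟩ := htree.isConnected x z
      set q : T.Path x z := w.toPath
      have hsup : ∀ m ∈ (q : T.Walk x z).support, m ∈ A :=
        fun m hm => hA x hxA z hz q q.2 m hm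
      have hedge : ∀ e ∈ (q : T.Walk x z).edges, e ∉ ({s(x, y)} : Set (Sym2 ι)) := by
        intro e he hee
        rw [Set.mem_singleton_iff] at hee
        subst hee
        exact hyA (hsup y ((q : T.Walk x z).snd_mem_support_of_mem_edges he))
      exact ⟨((q : T.Walk x z).toDeleteEdges _ hedge)⟩
    have hF2 : D.Reachable y j := by
      have hedge : ∀ e ∈ r'.edges, e ∉ ({s(x, y)} : Set (Sym2 ι)) := by
        intro e he hee
        rw [Set.mem_singleton_iff] at hee
        subst hee
        exact hxr' (r'.fst_mem_support_of_mem_edges he)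
      exact ⟨(r'.toDeleteEdges _ hedge)⟩
    have hF3 : ∀ z ∈ B, D.Reachable j z := by
      intro z hz
      exact keyreach j z B hB hj hz (fun hxB => hdisj x hxA hxB)
    refine ⟨x, hxA, ?_⟩
    intro S hS ⟨q0, hq0S, hq0A⟩ ⟨r0, hr0S, hr0B⟩
    by_contra hxS
    have h1 : D.Reachable q0 r0 := keyreach q0 r0 S hS hq0S hr0S hxS
    have h2 : D.Reachable x r0 := (hF1 q0 hq0A).trans h1
    have h3 : D.Reachable y r0 := hF2.trans (hF3 r0 hr0B)
    exact hbridge (h2.trans h3.symm)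

lemma helly3 (htree : T.IsTree) {S1 S2 S3 : Set ι}
    (h1 : PC T S1) (h2 : PC T S2) (h3 : PC T S3)
    (h12 : ∃ z, z ∈ S1 ∧ z ∈ S2) (h13 : ∃ z, z ∈ S1 ∧ z ∈ S3)
    (h23 : ∃ z, z ∈ S2 ∧ z ∈ S3) :
    ∃ z, z ∈ S1 ∧ z ∈ S2 ∧ z ∈ S3 := by
  classical
  by_contra hc
  push_neg at hc
  have hdisj : ∀ z, z ∈ S3 → z ∈ S1 ∩ S2 → False :=
    fun z hz3 hz12 => hc z hz12.1 hz12.2 hz3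
  obtain ⟨z12, hz1, hz2⟩ := h12
  obtain ⟨z13, hz1', hz3'⟩ := h13
  obtain ⟨z23, hz2', hz3''⟩ := h23
  obtain ⟨x, hx3, hx⟩ := sep htree h3 (h1.inter h2) ⟨z13, hz3'⟩ ⟨z12, hz1, hz2⟩ hdisj
  have hxS1 : x ∈ S1 := hx S1 h1 ⟨z13, hz1', hz3'⟩ ⟨z12, hz1, hz1, hz2⟩
  have hxS2 : x ∈ S2 := hx S2 h2 ⟨z23, hz2', hz3''⟩ ⟨z12, hz2, hz1, hz2⟩
  exact hc x hxS1 hxS2 hx3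

lemma helly4 (htree : T.IsTree) {S1 S2 S3 S4 : Set ι}
    (h1 : PC T S1) (h2 : PC T S2) (h3 : PC T S3) (h4 : PC T S4)
    (h12 : ∃ z, z ∈ S1 ∧ z ∈ S2) (h13 : ∃ z, z ∈ S1 ∧ z ∈ S3)
    (h14 : ∃ z, z ∈ S1 ∧ z ∈ S4) (h23 : ∃ z, z ∈ S2 ∧ z ∈ S3)
    (h24 : ∃ z, z ∈ S2 ∧ z ∈ S4) (h34 : ∃ z, z ∈ S3 ∧ z ∈ S4) :
    ∃ z, z ∈ S1 ∧ z ∈ S2 ∧ z ∈ S3 ∧ z ∈ S4 := by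
  have hA := h1.inter h2
  have hA3 : ∃ z, z ∈ (S1 ∩ S2) ∧ z ∈ S3 := by
    obtain ⟨z, hz1, hz2, hz3⟩ := helly3 htree h1 h2 h3 h12 h13 h23
    exact ⟨z, ⟨hz1, hz2⟩, hz3⟩
  have hA4 : ∃ z, z ∈ (S1 ∩ S2) ∧ z ∈ S4 := by
    obtain ⟨z, hz1, hz2, hz4⟩ := helly3 htree h1 h2 h4 h12 h14 h24
    exact ⟨z, ⟨hz1, hz2⟩, hz4⟩
  obtain ⟨z, hzA, hz3, hz4⟩ := helly3 htree hA h3 h4 hA3 hA4 h34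
  exact ⟨z, hzA.1, hzA.2, hz3, hz4⟩

lemma helly5 (htree : T.IsTree) {S1 S2 S3 S4 S5 : Set ι}
    (h1 : PC T S1) (h2 : PC T S2) (h3 : PC T S3) (h4 : PC T S4) (h5 : PC T S5)
    (h12 : ∃ z, z ∈ S1 ∧ z ∈ S2) (h13 : ∃ z, z ∈ S1 ∧ z ∈ S3)
    (h14 : ∃ z, z ∈ S1 ∧ z ∈ S4) (h15 : ∃ z, z ∈ S1 ∧ z ∈ S5)
    (h23 : ∃ z, z ∈ S2 ∧ z ∈ S3) (h24 : ∃ z, z ∈ S2 ∧ z ∈ S4)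
    (h25 : ∃ z, z ∈ S2 ∧ z ∈ S5) (h34 : ∃ z, z ∈ S3 ∧ z ∈ S4)
    (h35 : ∃ z, z ∈ S3 ∧ z ∈ S5) (h45 : ∃ z, z ∈ S4 ∧ z ∈ S5) :
    ∃ z, z ∈ S1 ∧ z ∈ S2 ∧ z ∈ S3 ∧ z ∈ S4 ∧ z ∈ S5 := by
  have hA := h1.inter h2
  have hA3 : ∃ z, z ∈ (S1 ∩ S2) ∧ z ∈ S3 := by
    obtain ⟨z, hz1, hz2, hz3⟩ := helly3 htree h1 h2 h3 h12 h13 h23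
    exact ⟨z, ⟨hz1, hz2⟩, hz3⟩
  have hA4 : ∃ z, z ∈ (S1 ∩ S2) ∧ z ∈ S4 := by
    obtain ⟨z, hz1, hz2, hz4⟩ := helly3 htree h1 h2 h4 h12 h14 h24
    exact ⟨z, ⟨hz1, hz2⟩, hz4⟩
  have hA5 : ∃ z, z ∈ (S1 ∩ S2) ∧ z ∈ S5 := by
    obtain ⟨z, hz1, hz2, hz5⟩ := helly3 htree h1 h2 h5 h12 h15 h25
    exact ⟨z, ⟨hz1, hz2⟩, hz5⟩
  obtain ⟨z, hzA, hz3, hz4, hz5⟩ := helly4 htree hA h3 h4 h5 hA3 hA4 hA5 h34 h35 h45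
  exact ⟨z, hzA.1, hzA.2, hz3, hz4, hz5⟩

end LowerBound

lemma K222_not_tw3 : ¬ TreewidthLE K222 3 := by
  rintro ⟨ι, T, bag, htree, hcov, hedge, hpath, hcard⟩
  classical
  set S : Fin 6 → Set ι := fun v => {i | v ∈ bag i} with hS
  have hPC : ∀ v, PC T (S v) := fun v i hi j hj p hp m hm => hpath v i j p hp hi hj m hm
  have hE : ∀ u v : Fin 6, u.val % 3 ≠ v.val % 3 → ∃ z, z ∈ S u ∧ z ∈ S v := by
    intro u v h
    obtain ⟨i, h1, h2⟩ := hedge u v h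
    exact ⟨i, h1, h2⟩
  -- helper: two bagged antipodal pairs contradiction
  have twoP : ∀ a a' b b' c : Fin 6,
      ({a, a', b, b', c} : Finset (Fin 6)).card = 5 →
      a.val % 3 ≠ b.val % 3 → a.val % 3 ≠ b'.val % 3 →
      a'.val % 3 ≠ b.val % 3 → a'.val % 3 ≠ b'.val % 3 →
      a.val % 3 ≠ c.val % 3 → a'.val % 3 ≠ c.val % 3 →
      b.val % 3 ≠ c.val % 3 → b'.val % 3 ≠ c.val % 3 →
      (∃ z, z ∈ S a ∧ z ∈ S a') → (∃ z, z ∈ S b ∧ z ∈ S b') → False := by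
    intro a a' b b' c hcard5 hab hab' ha'b ha'b' hac ha'c hbc hb'c hPa hPb
    obtain ⟨z, h1, h2, h3, h4, h5⟩ := helly5 htree (hPC a) (hPC a') (hPC b) (hPC b') (hPC c)
      hPa (hE a b hab) (hE a b' hab') (hE a c hac)
      (hE a' b ha'b) (hE a' b' ha'b') (hE a' c ha'c)
      hPb (hE b c hbc) (hE b' c hb'c)
    have hsub : ({a, a', b, b', c} : Finset (Fin 6)) ⊆ bag z := by
      intro x hx
      simp only [Finset.mem_insert, Finset.mem_singleton] at hx
      rcases hx with rfl | rfl | rfl | rfl | rfl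
      exacts [h1, h2, h3, h4, h5]
    have := Finset.card_le_card hsub
    rw [hcard5] at this
    have := hcard z
    omega
  -- helper: two unbagged antipodal pairs contradiction
  have noP : ∀ b b' c c' : Fin 6,
      b.val % 3 ≠ c.val % 3 → b.val % 3 ≠ c'.val % 3 →
      b'.val % 3 ≠ c.val % 3 → b'.val % 3 ≠ c'.val % 3 →
      ¬(∃ z, z ∈ S b ∧ z ∈ S b') → ¬(∃ z, z ∈ S c ∧ z ∈ S c') → False := by
    intro b b' c c' hbc hbc' hb'c hb'c' hnPb hnPc
    obtain ⟨ib, hib⟩ := hcov b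
    obtain ⟨ib', hib'⟩ := hcov b'
    obtain ⟨x, hxb, hx⟩ := sep htree (hPC b) (hPC b') ⟨ib, hib⟩ ⟨ib', hib'⟩
      (fun z hz hz' => hnPb ⟨z, hz, hz'⟩)
    have hxc : x ∈ S c := hx (S c) (hPC c)
      (by obtain ⟨z, h1, h2⟩ := hE b c hbc; exact ⟨z, h2, h1⟩)
      (by obtain ⟨z, h1, h2⟩ := hE b' c hb'c; exact ⟨z, h2, h1⟩)
    have hxc' : x ∈ S c' := hx (S c') (hPC c')
      (by obtain ⟨z, h1, h2⟩ := hE b c' hbc'; exact ⟨z, h2, h1⟩)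
      (by obtain ⟨z, h1, h2⟩ := hE b' c' hb'c'; exact ⟨z, h2, h1⟩)
    exact hnPc ⟨x, hxc, hxc'⟩
  by_cases hP1 : ∃ z, z ∈ S 0 ∧ z ∈ S 3
  · by_cases hP2 : ∃ z, z ∈ S 1 ∧ z ∈ S 4
    · exact twoP 0 3 1 4 2 (by decide) (by decide) (by decide) (by decide) (by decide)
        (by decide) (by decide) (by decide) (by decide) hP1 hP2
    · by_cases hP3 : ∃ z, z ∈ S 2 ∧ z ∈ S 5
      · exact twoP 0 3 2 5 1 (by decide) (by decide) (by decide) (by decide) (by decide)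
          (by decide) (by decide) (by decide) (by decide) hP1 hP3
      · exact noP 1 4 2 5 (by decide) (by decide) (by decide) (by decide) hP2 hP3
  · by_cases hP2 : ∃ z, z ∈ S 1 ∧ z ∈ S 4
    · by_cases hP3 : ∃ z, z ∈ S 2 ∧ z ∈ S 5
      · exact twoP 1 4 2 5 0 (by decide) (by decide) (by decide) (by decide) (by decide)
          (by decide) (by decide) (by decide) (by decide) hP2 hP3
      · exact noP 0 3 2 5 (by decide) (by decide) (by decide) (by decide) hP1 hP3
    · exact noP 0 3 1 4 (by decide) (by decide) (by decide) (by decide) hP1 hP2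

/-- `K222` with the single edge `{a,b}` removed. -/
def Kminus (a b : Fin 6) : SimpleGraph (Fin 6) where
  Adj x y := x.val % 3 ≠ y.val % 3 ∧ ¬(x = a ∧ y = b) ∧ ¬(x = b ∧ y = a)
  symm := ⟨fun x y ⟨h1, h2, h3⟩ =>
    ⟨Ne.symm h1, fun ⟨p, q⟩ => h3 ⟨q, p⟩, fun ⟨p, q⟩ => h2 ⟨q, p⟩⟩⟩
  loopless := ⟨fun x h => h.1 rfl⟩

set_option maxHeartbeats 1000000 in
set_option synthInstance.maxHeartbeats 400000 in
set_option synthInstance.maxSize 512 in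
lemma Kminus_key : ∀ a b : Fin 6, a.val % 3 ≠ b.val % 3 → ∃ c : Fin 6,
    (∀ v : Fin 6, v ∈ ({a, c, b + 3, c + 3} : Finset (Fin 6)) ∨
      v ∈ ({c, a + 3, b + 3, c + 3} : Finset (Fin 6)) ∨
      v ∈ ({b, c, a + 3, c + 3} : Finset (Fin 6))) ∧
    (∀ x y : Fin 6, x.val % 3 ≠ y.val % 3 → ¬(x = a ∧ y = b) → ¬(x = b ∧ y = a) →
      (x ∈ ({a, c, b + 3, c + 3} : Finset (Fin 6)) ∧ y ∈ ({a, c, b + 3, c + 3} : Finset (Fin 6))) ∨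
      (x ∈ ({c, a + 3, b + 3, c + 3} : Finset (Fin 6)) ∧ y ∈ ({c, a + 3, b + 3, c + 3} : Finset (Fin 6))) ∨
      (x ∈ ({b, c, a + 3, c + 3} : Finset (Fin 6)) ∧ y ∈ ({b, c, a + 3, c + 3} : Finset (Fin 6)))) ∧
    (∀ v : Fin 6, v ∈ ({a, c, b + 3, c + 3} : Finset (Fin 6)) →
      v ∈ ({b, c, a + 3, c + 3} : Finset (Fin 6)) →
      v ∈ ({c, a + 3, b + 3, c + 3} : Finset (Fin 6))) := by
  decide

lemma Kminus_tw (a b : Fin 6) (hab : a.val % 3 ≠ b.val % 3) :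
    TreewidthLE (Kminus a b) 3 := by
  obtain ⟨c, hcov, hedge, hmid⟩ := Kminus_key a b hab
  refine threeBag (Kminus a b)
    ![{a, c, b + 3, c + 3}, {c, a + 3, b + 3, c + 3}, {b, c, a + 3, c + 3}] ?_ ?_ ?_ ?_
  · intro v
    rcases hcov v with h | h | h
    exacts [⟨0, h⟩, ⟨1, h⟩, ⟨2, h⟩]
  · intro x y hxy
    rcases hedge x y hxy.1 hxy.2.1 hxy.2.2 with h | h | h
    exacts [⟨0, h⟩, ⟨1, h⟩, ⟨2, h⟩]
  · intro v h0 h2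
    exact hmid v h0 h2
  · have card4 : ∀ w x y z : Fin 6, ({w, x, y, z} : Finset (Fin 6)).card ≤ 4 := by
      intro w x y z
      refine le_trans (Finset.card_insert_le _ _) (Nat.succ_le_succ ?_)
      refine le_trans (Finset.card_insert_le _ _) (Nat.succ_le_succ ?_)
      refine le_trans (Finset.card_insert_le _ _) (Nat.succ_le_succ ?_)
      simp
    intro i
    fin_cases i
    · exact card4 a c (b + 3) (c + 3)
    · exact card4 c (a + 3) (b + 3) (c + 3)
    · exact card4 b c (a + 3) (c + 3)

lemma K222_tw4 : TreewidthLE K222 4 := by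
  apply twoBagNonadj K222 (0 : Fin 6) 3 (by decide) (by decide)
  simp

lemma minor_tw3 (W : Type) (H : SimpleGraph W) (hm : IsMinorOf H K222)
    (hiso : IsEmpty (K222 ≃g H)) : TreewidthLE H 3 := by
  classical
  obtain ⟨B, hne, hdisj, hconn, hadj⟩ := hm
  set g : W → Fin 6 := fun w => (hne w).choose with hgdef
  have hg : ∀ w, g w ∈ B w := fun w => (hne w).choose_spec
  have ginj : Injective g := by
    intro u v h
    by_contra hne'
    exact Set.disjoint_left.mp (hdisj u v hne') (hg u) (h ▸ hg v)
  haveI : Fintype W := Fintype.ofInjective g ginj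
  have hcard6 : Fintype.card W ≤ 6 := by
    simpa using Fintype.card_le_of_injective g ginj
  by_cases h4 : Fintype.card W ≤ 4
  · exact oneBag H (by omega)
  · have h56 : Fintype.card W = 5 ∨ Fintype.card W = 6 := by omega
    rcases h56 with h5 | h6
    · -- five branch sets
      have hnsurj : ¬ Surjective g := by
        intro hs
        have := Fintype.card_le_of_surjective g hs
        simp [h5] at this
      rw [Surjective] at hnsurj
      push_neg at hnsurj
      obtain ⟨m, hm⟩ := hnsurj
      have claimA : ∀ x : Fin 6, x ≠ m → ∃ w, g w = x := by
        have hRcard : (Finset.univ.image g).card = 5 := by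
          rw [Finset.card_image_of_injective _ ginj, Finset.card_univ, h5]
        have hsub : Finset.univ.image g ⊆ Finset.univ.erase m := by
          intro x hx
          obtain ⟨w, _, rfl⟩ := Finset.mem_image.mp hx
          exact Finset.mem_erase.mpr ⟨hm w, Finset.mem_univ _⟩
        have herase : (Finset.univ.erase m).card = 5 := by
          rw [Finset.card_erase_of_mem (Finset.mem_univ m), Finset.card_univ]
          simp
        have hEq : Finset.univ.image g = Finset.univ.erase m :=
          Finset.eq_of_subset_of_card_le hsub (by rw [hRcard, herase])
        intro x hx
        have : x ∈ Finset.univ.image g := by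
          rw [hEq]; exact Finset.mem_erase.mpr ⟨hx, Finset.mem_univ _⟩
        obtain ⟨w, _, hw⟩ := Finset.mem_image.mp this
        exact ⟨w, hw⟩
      have hWne : Nonempty W := Fintype.card_pos_iff.mp (by omega)
      obtain ⟨w1, hW1⟩ : ∃ w1, ∀ w, w ≠ w1 → m ∉ B w := by
        by_cases hmB : ∃ w, m ∈ B w
        · obtain ⟨w1, hw1⟩ := hmB
          refine ⟨w1, fun w hw hmem => ?_⟩
          exact Set.disjoint_left.mp (hdisj w w1 hw) hmem hw1
        · push_neg at hmB
          exact ⟨Classical.arbitrary W, fun w _ => hmB w⟩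
      have claimB : ∀ w, w ≠ w1 → ∀ x ∈ B w, x = g w := by
        intro w hw x hx
        by_contra hxg
        have hxm : x ≠ m := fun h => hW1 w hw (h ▸ hx)
        obtain ⟨w', hw'⟩ := claimA x hxm
        have hww : w' ≠ w := fun h => hxg (by rw [← hw', h])
        exact Set.disjoint_left.mp (hdisj w' w hww) (hw' ▸ hg w') hx
      have hsel : ∀ z1 z2 : Fin 6, ∃ x x' : Fin 6,
          x.val % 3 = x'.val % 3 ∧ x ≠ x' ∧ x ≠ z1 ∧ x ≠ z2 ∧ x' ≠ z1 ∧ x' ≠ z2 := by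
        decide
      obtain ⟨x, x', hmod, hxx', hxm, hxw1, hx'm, hx'w1⟩ := hsel m (g w1)
      obtain ⟨u, hu⟩ := claimA x hxm
      obtain ⟨v, hv⟩ := claimA x' hx'm
      have hu1 : u ≠ w1 := fun h => hxw1 (by rw [← hu, h])
      have hv1 : v ≠ w1 := fun h => hx'w1 (by rw [← hv, h])
      have huv : u ≠ v := fun h => hxx' (by rw [← hu, h, hv])
      have hnadj : ¬ H.Adj u v := by
        intro hAdj
        obtain ⟨p, hp, q, hq, hpq⟩ := hadj u v hAdj
        have hp' : p = x := by rw [claimB u hu1 p hp, hu]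
        have hq' : q = x' := by rw [claimB v hv1 q hq, hv]
        rw [hp', hq'] at hpq
        exact hpq hmod
      exact twoBagNonadj H u v huv hnadj (by omega)
    · -- six branch sets: all singletons
      have gbij : Bijective g :=
        (Fintype.bijective_iff_injective_and_card g).mpr ⟨ginj, by simp [h6]⟩
      have claimB : ∀ w, ∀ x ∈ B w, x = g w := by
        intro w x hx
        obtain ⟨w', hw'⟩ := gbij.2 x
        have hww : w' = w := by
          by_contra hne'
          exact Set.disjoint_left.mp (hdisj w' w hne') (hw' ▸ hg w') hx
        rw [← hw', hww]
      by_cases hmiss : ∃ u v, K222.Adj (g u) (g v) ∧ ¬ H.Adj u v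
      · obtain ⟨u, v, hadjuv, hnadj⟩ := hmiss
        refine tw_mono H (Kminus (g u) (g v)) g ginj ?_ (Kminus_tw (g u) (g v) hadjuv)
        intro p q hpq
        obtain ⟨p', hp', q', hq', hK⟩ := hadj p q hpq
        rw [claimB p p' hp', claimB q q' hq'] at hK
        refine ⟨hK, ?_, ?_⟩
        · rintro ⟨h1, h2⟩
          exact hnadj (ginj h1 ▸ ginj h2 ▸ hpq)
        · rintro ⟨h1, h2⟩
          have h1' : p = v := ginj h1
          have h2' : q = u := ginj h2
          exact hnadj ((h1' ▸ h2' ▸ hpq : H.Adj v u).symm)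
      · push_neg at hmiss
        set e : W ≃ Fin 6 := Equiv.ofBijective g gbij with hedef
        have hge : ∀ x : Fin 6, g (e.symm x) = x := fun x => e.apply_symm_apply x
        have iso : K222 ≃g H := by
          refine ⟨e.symm, ?_⟩
          intro a b
          constructor
          · intro h
            obtain ⟨p, hp, q, hq, hpq⟩ := hadj _ _ h
            rw [claimB _ p hp, claimB _ q hq, hge, hge] at hpq
            exact hpq
          · intro h
            apply hmiss
            rw [hge, hge]
            exact h
        exact (hiso.false iso).elim

theorem K222_treewidth_four_minor_minimal :
    TreewidthLE K222 4 ∧ ¬ TreewidthLE K222 3 ∧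
    ∀ (W : Type) (H : SimpleGraph W), IsMinorOf H K222 → IsEmpty (K222 ≃g H) →
      TreewidthLE H 3 :=
  ⟨K222_tw4, K222_not_tw3, minor_tw3⟩
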